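/- For fixed k with 1 ≤ k ≤ n-1, the number of cyclic (circular) permutations of {1,...,n} that avoid all substrings j(j+k) with 1 ≤ j ≤ n-k equals Σ_{j=0}^{n-k} (-1)^j · C(n-k, j) · (n-j-1)!. -/

import Mathlib

set_option linter.unusedSectionVars false

open Equiv Finset

namespace CstarAux

/-- transitivity of a permutation -/
def IsTrans {γ : Type*} (σ : Equiv.Perm γ) : Prop := ∀ x y : γ, ∃ m : ℕ, (σ ^ m) x = y

lemma pow_apply_succ {γ : Type*} (σ : Equiv.Perm γ) (m : ℕ) (x : γ) :
    (σ ^ (m + 1)) x = (σ ^ m) (σ x) := by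
  rw [pow_succ, Equiv.Perm.mul_apply]

variable {β : Type} [DecidableEq β]

lemma rn_some (σ : Perm (Option β)) {x y : β} (h : σ (some x) = some y) :
    removeNone σ x = y := by
  have := Equiv.removeNone_some σ (x := x) ⟨y, h⟩
  rw [h] at this
  exact Option.some_injective _ this

lemma rn_none (σ : Perm (Option β)) {x : β} (h : σ (some x) = none) :
    some (removeNone σ x) = σ none := Equiv.removeNone_none σ h

lemma rn_cases (σ : Perm (Option β)) (x : β) :
    σ (some x) = some (removeNone σ x) ∨
      (σ (some x) = none ∧ σ none = some (removeNone σ x)) := by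
  cases h : σ (some x) with
  | none => exact Or.inr ⟨rfl, (rn_none σ h).symm⟩
  | some z => exact Or.inl (by rw [rn_some σ h])

lemma aux_fwd (σ : Perm (Option β)) (y : β) :
    ∀ m, ∀ x : β, (σ ^ m) (some x) = some y → ∃ m', ((removeNone σ) ^ m') x = y := by
  intro m
  induction m using Nat.strong_induction_on with
  | _ m ih =>
    intro x hm
    rcases m with _ | m
    · exact ⟨0, by simpa using Option.some_injective _ hm⟩
    rw [pow_apply_succ] at hm
    cases hx : σ (some x) with
    | some z =>
      rw [hx] at hm
      obtain ⟨m', hm'⟩ := ih m (Nat.lt_succ_self m) z hm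
      exact ⟨m' + 1, by rw [pow_apply_succ, rn_some σ hx, hm']⟩
    | none =>
      rw [hx] at hm
      rcases m with _ | m
      · exact absurd hm (by simp)
      rw [pow_apply_succ] at hm
      cases hnone : σ none with
      | none =>
        exact absurd (σ.injective (hx.trans hnone.symm)) (by simp)
      | some w =>
        rw [hnone] at hm
        obtain ⟨m', hm'⟩ := ih m (by omega) w hm
        have hw : removeNone σ x = w := Option.some_injective _ ((rn_none σ hx).trans hnone)
        exact ⟨m' + 1, by rw [pow_apply_succ, hw, hm']⟩

lemma isTrans_removeNone (σ : Perm (Option β)) (h : IsTrans σ) : IsTrans (removeNone σ) := by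
  intro x y
  obtain ⟨m, hm⟩ := h (some x) (some y)
  exact aux_fwd σ y m x hm

lemma aux_bwd (σ : Perm (Option β)) :
    ∀ m (x y : β), ((removeNone σ) ^ m) x = y → ∃ m', (σ ^ m') (some x) = some y := by
  intro m
  induction m with
  | zero => exact fun x y h => ⟨0, by simpa using congrArg some h⟩
  | succ m ih =>
    intro x y h
    rw [pow_apply_succ] at h
    obtain ⟨m', hm'⟩ := ih (removeNone σ x) y h
    rcases rn_cases σ x with h1 | ⟨h1, h2⟩
    · exact ⟨m' + 1, by rw [pow_add, Equiv.Perm.mul_apply, pow_one, h1, hm']⟩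
    · refine ⟨m' + 2, ?_⟩
      have : (σ ^ (m' + 2)) (some x) = (σ ^ m') ((σ ^ 2) (some x)) := by
        rw [pow_add, Equiv.Perm.mul_apply]
      rw [this, pow_apply_succ, pow_one, h1, h2, hm']

lemma isTrans_of_removeNone (σ : Perm (Option β)) (a : β) (ha : σ (some a) = none)
    (h : IsTrans (removeNone σ)) : IsTrans σ := by
  have key : ∀ x y : β, ∃ m, (σ ^ m) (some x) = some y := fun x y => by
    obtain ⟨m, hm⟩ := h x y; exact aux_bwd σ m x y hm
  obtain ⟨w, hw⟩ : ∃ w : β, σ none = some w := by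
    cases hw : σ none with
    | none => exact absurd (σ.injective (ha.trans hw.symm)) (by simp)
    | some w => exact ⟨w, rfl⟩
  have trans2 : ∀ u v t : Option β, (∃ m, (σ ^ m) u = v) → (∃ m, (σ ^ m) v = t) →
      ∃ m, (σ ^ m) u = t := by
    rintro u v t ⟨m1, h1⟩ ⟨m2, h2⟩
    exact ⟨m2 + m1, by rw [pow_add, Equiv.Perm.mul_apply, h1, h2]⟩
  intro u v
  match u, v with
  | some x, some y => exact key x y
  | some x, none => exact trans2 _ (some a) _ (key x a) ⟨1, by simpa using ha⟩
  | none, some y => exact trans2 _ (some w) _ ⟨1, by simpa using hw⟩ (key w y)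
  | none, none =>
    exact trans2 _ (some w) _ ⟨1, by simpa using hw⟩
      (trans2 _ (some a) _ (key w a) ⟨1, by simpa using ha⟩)

/-- insert `none` right after `a` in the cycle of `e` -/
def ins (a : β) (e : Perm β) : Perm (Option β) := e.optionCongr * Equiv.swap (some a) none

lemma ins_some_ne (a : β) (e : Perm β) {x : β} (hx : x ≠ a) :
    ins a e (some x) = some (e x) := by
  have h1 : Equiv.swap (some a) none (some x) = some x :=
    Equiv.swap_apply_of_ne_of_ne (by simpa using hx) (by simp)
  simp [ins, Equiv.Perm.mul_apply, h1]

lemma ins_a (a : β) (e : Perm β) : ins a e (some a) = none := by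
  simp [ins, Equiv.Perm.mul_apply, Equiv.swap_apply_left]

lemma ins_none (a : β) (e : Perm β) : ins a e none = some (e a) := by
  simp [ins, Equiv.Perm.mul_apply, Equiv.swap_apply_right]

lemma rn_ins (a : β) (e : Perm β) : removeNone (ins a e) = e := by
  ext x
  by_cases hx : x = a
  · apply Option.some_injective
    rw [hx]
    exact (rn_none _ (ins_a a e)).trans (ins_none a e)
  · exact rn_some _ (ins_some_ne a e hx)

lemma ins_rn (a : β) (σ : Perm (Option β)) (h : σ (some a) = none) :
    ins a (removeNone σ) = σ := by
  ext u
  match u with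
  | none => rw [ins_none, rn_none σ h]
  | some x =>
    by_cases hx : x = a
    · subst hx; rw [ins_a, h]
    · rw [ins_some_ne _ _ hx]
      cases hy : σ (some x) with
      | none => exact absurd (σ.injective (hy.trans h.symm)) (by simp [hx])
      | some z => rw [rn_some σ hy]

lemma constr_iff (σ : Perm (Option β)) {a : β} (h : σ (some a) = none) {x y : β}
    (hx : x ≠ a) : σ (some x) = some y ↔ removeNone σ x = y := by
  constructor
  · exact rn_some σ
  · rintro rfl
    rcases rn_cases σ x with h1 | ⟨h1, _⟩
    · exact h1
    · exact absurd (σ.injective (h1.trans h.symm)) (by simp [hx])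

/-- contraction equivalence: cycles through `a ↦ none` with constraints on `T` correspond to
cycles on `β` with the same constraints -/
def contractEquiv (a : β) (T : Finset β) (g : β → β) (haT : a ∉ T) :
    {σ : Perm (Option β) // IsTrans σ ∧ σ (some a) = none ∧
        ∀ c ∈ T, σ (some c) = some (g c)} ≃
      {e : Perm β // IsTrans e ∧ ∀ c ∈ T, e c = g c} where
  toFun := fun ⟨σ, h1, h2, h3⟩ =>
    ⟨removeNone σ, isTrans_removeNone σ h1,
      fun c hc => (constr_iff σ h2 (fun h => haT (h ▸ hc))).1 (h3 c hc)⟩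
  invFun := fun ⟨e, h1, h2⟩ =>
    ⟨ins a e, isTrans_of_removeNone _ a (ins_a a e) ((rn_ins a e).symm ▸ h1), ins_a a e,
      fun c hc => by rw [ins_some_ne a e (fun h => haT (h ▸ hc)), h2 c hc]⟩
  left_inv := fun ⟨σ, h1, h2, h3⟩ => Subtype.ext (ins_rn a σ h2)
  right_inv := fun ⟨e, h1, h2⟩ => Subtype.ext (rn_ins a e)

lemma permCongr_pow_apply {γ δ : Type*} (ε : γ ≃ δ) (σ : Perm γ) (m : ℕ) (x : δ) :
    ((ε.permCongr σ) ^ m) x = ε ((σ ^ m) (ε.symm x)) := by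
  induction m generalizing x with
  | zero => simp
  | succ m ih =>
    rw [pow_apply_succ, ih ((ε.permCongr σ) x), Equiv.permCongr_apply, Equiv.symm_apply_apply,
      ← pow_apply_succ]

lemma isTrans_permCongr {γ δ : Type*} (ε : γ ≃ δ) (σ : Perm γ) :
    IsTrans (ε.permCongr σ) ↔ IsTrans σ := by
  constructor
  · intro h x y
    obtain ⟨m, hm⟩ := h (ε x) (ε y)
    rw [permCongr_pow_apply, Equiv.symm_apply_apply] at hm
    exact ⟨m, ε.injective hm⟩
  · intro h x y
    obtain ⟨m, hm⟩ := h (ε.symm x) (ε.symm y)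
    exact ⟨m, by rw [permCongr_pow_apply, hm, Equiv.apply_symm_apply]⟩

lemma nat_card_subtype {α : Type} [Fintype α] (p : α → Prop) [DecidablePred p] :
    Nat.card {x // p x} = #(univ.filter p) := by
  rw [Nat.card_eq_fintype_card, Fintype.card_subtype]

/-- the key contraction step on cardinalities -/
lemma contract_step {α : Type} [Fintype α] [DecidableEq α] (a b : α) (hab : a ≠ b)
    (T : Finset α) (g : α → α) (haT : a ∉ T) (hbT : b ∉ T) (hgb : ∀ c ∈ T, g c ≠ b) :
    Nat.card {σ : Perm α // IsTrans σ ∧ σ a = b ∧ ∀ c ∈ T, σ c = g c}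
      = Nat.card {e : Perm {x : α // x ≠ b} // IsTrans e ∧
          ∀ c ∈ T.subtype (· ≠ b), e c =
            (fun x : {x : α // x ≠ b} => if h : g ↑x = b then x else ⟨g ↑x, h⟩) c} := by
  classical
  set g' : {x : α // x ≠ b} → {x : α // x ≠ b} :=
    fun x => if h : g ↑x = b then x else ⟨g ↑x, h⟩ with hg'
  let ε : Option {x : α // x ≠ b} ≃ α := Equiv.optionSubtypeNe b
  let a' : {x : α // x ≠ b} := ⟨a, hab⟩
  have hεs : ∀ (c : α) (hc : c ≠ b), ε.symm c = some ⟨c, hc⟩ := fun c hc =>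
    Equiv.optionSubtypeNe_symm_of_ne hc
  have hεn : ε.symm b = none := Equiv.optionSubtypeNe_symm_self b
  have key : ∀ τ : Perm (Option {x : α // x ≠ b}),
      (IsTrans τ ∧ τ (some a') = none ∧
        ∀ c ∈ T.subtype (· ≠ b), τ (some c) = some (g' c)) ↔
      (IsTrans (ε.permCongr τ) ∧ (ε.permCongr τ) a = b ∧
        ∀ c ∈ T, (ε.permCongr τ) c = g c) := by
    intro τ
    have h2 : (ε.permCongr τ) a = b ↔ τ (some a') = none := by
      rw [Equiv.permCongr_apply, hεs a hab, Equiv.apply_eq_iff_eq_symm_apply, hεn]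
    have h3 : (∀ c ∈ T, (ε.permCongr τ) c = g c) ↔
        (∀ c ∈ T.subtype (· ≠ b), τ (some c) = some (g' c)) := by
      constructor
      · intro h c hc
        rw [Finset.mem_subtype] at hc
        have := h ↑c hc
        rw [Equiv.permCongr_apply, hεs ↑c c.2] at this
        have hgcb : g ↑c ≠ b := hgb ↑c hc
        rw [Equiv.apply_eq_iff_eq_symm_apply, hεs _ hgcb] at this
        rw [Subtype.coe_eta] at this
        rw [this, hg']
        simp [hgcb]
      · intro h c hc
        have hcb : c ≠ b := fun h' => hbT (h' ▸ hc)
        have hc' : (⟨c, hcb⟩ : {x : α // x ≠ b}) ∈ T.subtype (· ≠ b) := by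
          rw [Finset.mem_subtype]; exact hc
        have := h _ hc'
        have hgcb : g c ≠ b := hgb c hc
        rw [Equiv.permCongr_apply, hεs c hcb, this, hg']
        simp only [hgcb, dite_false]
        rfl
    rw [isTrans_permCongr, h2, h3]
  calc Nat.card {σ : Perm α // IsTrans σ ∧ σ a = b ∧ ∀ c ∈ T, σ c = g c}
      = Nat.card {τ : Perm (Option {x : α // x ≠ b}) // IsTrans τ ∧ τ (some a') = none ∧
          ∀ c ∈ T.subtype (· ≠ b), τ (some c) = some (g' c)} :=
        (Nat.card_congr (Equiv.subtypeEquiv ε.permCongr key)).symm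
    _ = _ := Nat.card_congr (contractEquiv a' (T.subtype (· ≠ b)) g'
          (by rw [Finset.mem_subtype]; exact haT))

lemma card_ne_sub (α : Type) [Fintype α] [DecidableEq α] (b : α) :
    Fintype.card {x : α // x ≠ b} = Fintype.card α - 1 := by
  have h := Fintype.card_subtype_compl (p := fun x : α => x = b)
  simpa [Fintype.card_subtype_eq] using h

lemma count_trans_constrained :
    ∀ (n : ℕ) (α : Type) (inst1 : Fintype α) (inst2 : DecidableEq α), Fintype.card α = n →
    ∀ (S : Finset α) (g : α → α) (r : α → ℕ),
      Set.InjOn g ↑S → (∀ a ∈ S, r a < r (g a)) →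
      Nat.card {σ : Perm α // IsTrans σ ∧ ∀ c ∈ S, σ c = g c} = (n - S.card - 1).factorial := by
  intro n
  induction n using Nat.strong_induction_on with
  | _ n ih =>
    intro α inst1 inst2 hcard S g r hinj hincr
    classical
    rcases S.eq_empty_or_nonempty with hS | hS
    · -- S = ∅
      subst hS
      simp only [Finset.notMem_empty, false_implies, implies_true, and_true, Finset.card_empty]
      by_cases hn : n ≤ 1
      · have hsub : Subsingleton α := by
          rw [← Fintype.card_le_one_iff_subsingleton, hcard]; exact hn
        have hall : ∀ σ : Perm α, IsTrans σ := fun σ x y =>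
          ⟨0, by simpa using Subsingleton.elim x y⟩
        rw [Nat.card_congr (Equiv.subtypeUnivEquiv hall), Nat.card_eq_fintype_card,
          Fintype.card_perm, hcard]
        interval_cases n <;> simp [Nat.factorial]
      · push_neg at hn
        obtain ⟨b⟩ : Nonempty α := Fintype.card_pos_iff.mp (by omega)
        have hfix : ∀ σ : Perm α, IsTrans σ → σ.symm b ≠ b := by
          intro σ hσ heq
          have hb : σ b = b := by
            conv_lhs => rw [← heq]
            exact σ.apply_symm_apply b
          obtain ⟨c, hc⟩ := Fintype.exists_ne_of_one_lt_card (hcard ▸ hn) b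
          obtain ⟨m, hm⟩ := hσ b c
          have hbm : ∀ m', (σ ^ m') b = b := by
            intro m'
            induction m' with
            | zero => simp
            | succ m' ihm => rw [pow_apply_succ, hb, ihm]
          exact hc ((hbm m ▸ hm).symm)
        rw [nat_card_subtype]
        rw [Finset.card_eq_sum_card_fiberwise
          (f := fun σ : Perm α => σ.symm b) (t := univ.erase b)
          (fun σ hσ => Finset.mem_erase.mpr ⟨hfix σ (Finset.mem_filter.mp hσ).2, mem_univ _⟩)]
        have hterm : ∀ a ∈ univ.erase b,
            #(((univ : Finset (Perm α)).filter IsTrans).filter fun σ => σ.symm b = a)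
              = (n - 2).factorial := by
          intro a ha
          obtain ⟨hab, -⟩ := Finset.mem_erase.mp ha
          have hstep : #(((univ : Finset (Perm α)).filter IsTrans).filter fun σ => σ.symm b = a)
              = Nat.card {σ : Perm α // IsTrans σ ∧ σ a = b ∧
                  ∀ c ∈ (∅ : Finset α), σ c = id c} := by
            rw [nat_card_subtype, Finset.filter_filter]
            have heq : ((univ : Finset (Perm α)).filter fun σ => IsTrans σ ∧ σ.symm b = a)
                = (univ : Finset (Perm α)).filter
                    (fun σ => IsTrans σ ∧ σ a = b ∧ ∀ c ∈ (∅ : Finset α), σ c = id c) := by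
              apply Finset.filter_congr
              intro σ _
              simp only [Finset.notMem_empty, false_implies, implies_true, and_true]
              constructor
              · rintro ⟨h1, h2⟩
                exact ⟨h1, by rw [← h2, Equiv.apply_symm_apply]⟩
              · rintro ⟨h1, h2⟩
                exact ⟨h1, by rw [Equiv.symm_apply_eq, h2]⟩
            rw [heq]
          rw [hstep, contract_step a b hab ∅ id (Finset.notMem_empty a)
            (Finset.notMem_empty b) (by simp)]
          have hcard' : Fintype.card {x : α // x ≠ b} = n - 1 := by
            rw [card_ne_sub, hcard]
          have h0 : #((∅ : Finset α).subtype (· ≠ b)) = 0 := by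
            simp [Finset.card_subtype]
          rw [ih (n - 1) (by omega) _ inferInstance inferInstance hcard' _ _ (fun _ => 0)
            (by intro c hc; rw [Finset.mem_coe, Finset.mem_subtype] at hc; simp at hc)
            (by intro c hc; rw [Finset.mem_subtype] at hc; simp at hc), h0]
          congr 1 <;> omega
        rw [Finset.sum_congr rfl hterm, Finset.sum_const, Finset.card_erase_of_mem (mem_univ b),
          Finset.card_univ, hcard]
        obtain ⟨m, rfl⟩ : ∃ m, n = m + 2 := ⟨n - 2, by omega⟩
        simp [Nat.factorial_succ, mul_comm]
    · -- S nonempty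
      obtain ⟨a, haS, hamax⟩ := S.exists_max_image (fun c => r (g c)) hS
      have hrab : r a < r (g a) := hincr a haS
      have hab : a ≠ g a := by
        intro h
        rw [← h] at hrab
        exact lt_irrefl _ hrab
      have hbS : g a ∉ S := fun hbS => absurd (hincr _ hbS) (not_lt.mpr (hamax _ hbS))
      have haT : a ∉ S.erase a := Finset.notMem_erase a S
      have hbT : g a ∉ S.erase a := fun h => hbS (Finset.erase_subset _ _ h)
      have hgb : ∀ c ∈ S.erase a, g c ≠ g a := fun c hc h =>
        (Finset.mem_erase.mp hc).1
          (hinj (Finset.mem_coe.mpr ((Finset.erase_subset _ _) hc)) (Finset.mem_coe.mpr haS) h)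
      have hSsplit : ∀ σ : Perm α,
          (IsTrans σ ∧ ∀ c ∈ S, σ c = g c) ↔
          (IsTrans σ ∧ σ a = g a ∧ ∀ c ∈ S.erase a, σ c = g c) := by
        intro σ
        constructor
        · exact fun ⟨h1, h2⟩ => ⟨h1, h2 a haS, fun c hc => h2 c ((Finset.erase_subset _ _) hc)⟩
        · rintro ⟨h1, h2, h3⟩
          refine ⟨h1, fun c hc => ?_⟩
          by_cases hca : c = a
          · subst hca; exact h2
          · exact h3 c (Finset.mem_erase.mpr ⟨hca, hc⟩)
      rw [Nat.card_congr (Equiv.subtypeEquivRight hSsplit)]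
      rw [contract_step a (g a) hab (S.erase a) g haT hbT hgb]
      have hn1 : 1 ≤ n := hcard ▸ Fintype.card_pos_iff.mpr ⟨a⟩
      have hcard' : Fintype.card {x : α // x ≠ g a} = n - 1 := by
        rw [card_ne_sub, hcard]
      have hScard : 1 ≤ S.card := Finset.card_pos.mpr hS
      rw [ih (n - 1) (by omega) _ inferInstance inferInstance hcard'
        ((S.erase a).subtype (· ≠ g a))
        (fun x : {x : α // x ≠ g a} => if h : g ↑x = g a then x else ⟨g ↑x, h⟩)
        (fun x => r ↑x) ?_ ?_]
      · have hTcard : #((S.erase a).subtype (· ≠ g a)) = S.card - 1 := by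
          have heq : #((S.erase a).subtype (· ≠ g a)) = #(S.erase a) := by
            refine Finset.card_bij (fun c _ => (c : α)) ?_ ?_ ?_
            · intro c hc
              rwa [Finset.mem_subtype] at hc
            · intro c _ d _ h
              exact Subtype.ext h
            · intro c hc
              exact ⟨⟨c, fun h => hbT (h ▸ hc)⟩, by rwa [Finset.mem_subtype], rfl⟩
          rw [heq, Finset.card_erase_of_mem haS]
        rw [hTcard]
        congr 1
        omega
      · intro c hc d hd h
        rw [Finset.mem_coe, Finset.mem_subtype] at hc hd
        have hc' : g ↑c ≠ g a := hgb _ hc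
        have hd' : g ↑d ≠ g a := hgb _ hd
        simp only [dif_neg hc', dif_neg hd'] at h
        have : g ↑c = g ↑d := congrArg Subtype.val h
        exact Subtype.ext (hinj (Finset.mem_coe.mpr ((Finset.erase_subset _ _) hc))
          (Finset.mem_coe.mpr ((Finset.erase_subset _ _) hd)) this)
      · intro c hc
        rw [Finset.mem_subtype] at hc
        have hc' : g ↑c ≠ g a := hgb _ hc
        simp only [dif_neg hc']
        exact hincr ↑c ((Finset.erase_subset _ _) hc)

end CstarAux

open CstarAux Finset Equiv in
/-- The number of cyclic permutations of `{1,...,n}` (single-orbit permutations `σ`,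
where "`b` immediately follows `a`" means `σ a = b`) avoiding all substrings `j(j+k)`,
`1 ≤ j ≤ n-k`, equals `∑_{j=0}^{n-k} (-1)^j C(n-k,j) (n-j-1)!`. Values 0-indexed. -/
theorem cstar_k_n (n k : ℕ) (hk : 1 ≤ k) (hkn : k ≤ n - 1) :
    (Nat.card {σ : Equiv.Perm (Fin n) //
        (∀ a b : Fin n, ∃ m : ℕ, (σ ^ m) a = b) ∧
        ∀ a : Fin n, ((σ a : ℕ)) ≠ (a : ℕ) + k} : ℤ) =
      ∑ j ∈ Finset.range (n - k + 1),
        (-1 : ℤ) ^ j * (n - k).choose j * (n - j - 1).factorial := by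
  classical
  have hkn' : k < n := by omega
  set tgt : Fin n → Fin n :=
    fun a => if h : (a : ℕ) + k < n then ⟨(a : ℕ) + k, h⟩ else a with htgt
  set F : Finset (Fin n) := univ.filter (fun a : Fin n => (a : ℕ) + k < n) with hF
  have htgtval : ∀ a : Fin n, (a : ℕ) + k < n → (tgt a : ℕ) = (a : ℕ) + k := by
    intro a ha
    rw [htgt]
    simp [ha]
  have hiff : ∀ σ : Perm (Fin n),
      ((∀ a b : Fin n, ∃ m : ℕ, (σ ^ m) a = b) ∧ ∀ a : Fin n, ((σ a : ℕ)) ≠ (a : ℕ) + k)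
        ↔ (IsTrans σ ∧ ∀ a ∈ F, σ a ≠ tgt a) := by
    intro σ
    apply and_congr Iff.rfl
    constructor
    · intro h a ha heq
      rw [hF, Finset.mem_filter] at ha
      exact h a (by rw [heq, htgtval a ha.2])
    · intro h a heq
      by_cases hlt : (a : ℕ) + k < n
      · refine h a (by rw [hF]; simp [hlt]) (Fin.ext ?_)
        rw [heq, htgtval a hlt]
      · exact hlt (heq ▸ (σ a).isLt)
  rw [Nat.card_congr (Equiv.subtypeEquivRight hiff), nat_card_subtype, ← Finset.filter_filter]
  set C : Finset (Perm (Fin n)) := univ.filter IsTrans with hC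
  have hFcard : #F = n - k := by
    have : F = Finset.attachFin (Finset.range (n - k))
        (fun m hm => by rw [Finset.mem_range] at hm; omega) := by
      ext a
      rw [hF, Finset.mem_attachFin, Finset.mem_filter, Finset.mem_range]
      constructor
      · rintro ⟨-, h⟩; omega
      · intro h; exact ⟨Finset.mem_univ a, by omega⟩
    rw [this, Finset.card_attachFin, Finset.card_range]
  have hcount : ∀ t ∈ F.powerset,
      (#(C.filter (fun σ => ∀ a ∈ t, σ a = tgt a)) : ℤ) = ((n - #t - 1).factorial : ℤ) := by
    intro t ht
    rw [Finset.mem_powerset] at ht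
    have hmemF : ∀ a ∈ t, (a : ℕ) + k < n := by
      intro a ha
      have := ht ha
      rw [hF, Finset.mem_filter] at this
      exact this.2
    have hinj : Set.InjOn tgt ↑t := by
      intro c hc d hd h
      rw [Finset.mem_coe] at hc hd
      apply Fin.ext
      have hcv := htgtval c (hmemF c hc)
      have hdv := htgtval d (hmemF d hd)
      have : (tgt c : ℕ) = (tgt d : ℕ) := by rw [h]
      omega
    have hincr : ∀ a ∈ t, (a : ℕ) < (tgt a : ℕ) := by
      intro a ha
      rw [htgtval a (hmemF a ha)]
      omega
    have := count_trans_constrained n (Fin n) inferInstance inferInstance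
      (Fintype.card_fin n) t tgt Fin.val hinj hincr
    rw [hC, Finset.filter_filter, ← nat_card_subtype, this]
  calc (#(C.filter (fun σ => ∀ a ∈ F, σ a ≠ tgt a)) : ℤ)
      = ∑ σ ∈ C, if ∀ a ∈ F, σ a ≠ tgt a then (1 : ℤ) else 0 :=
        (Finset.sum_boole _ _).symm
    _ = ∑ σ ∈ C, ∏ a ∈ F, (if σ a ≠ tgt a then (1 : ℤ) else 0) := by
        refine Finset.sum_congr rfl fun σ _ => ?_
        rw [Finset.prod_boole]
        congr 1
    _ = ∑ σ ∈ C, ∏ a ∈ F, ((-(if σ a = tgt a then (1 : ℤ) else 0)) + 1) := by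
        refine Finset.sum_congr rfl fun σ _ => Finset.prod_congr rfl fun a _ => ?_
        by_cases h : σ a = tgt a <;> simp [h]
    _ = ∑ σ ∈ C, ∑ t ∈ F.powerset,
          (∏ a ∈ t, -(if σ a = tgt a then (1 : ℤ) else 0)) * ∏ a ∈ F \ t, 1 := by
        refine Finset.sum_congr rfl fun σ _ => ?_
        rw [Finset.prod_add]
    _ = ∑ t ∈ F.powerset, (-1 : ℤ) ^ #t *
          ∑ σ ∈ C, (if ∀ a ∈ t, σ a = tgt a then (1 : ℤ) else 0) := by
        rw [Finset.sum_comm]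
        refine Finset.sum_congr rfl fun t _ => ?_
        rw [Finset.mul_sum]
        refine Finset.sum_congr rfl fun σ _ => ?_
        rw [Finset.prod_const_one, mul_one]
        have h1 : (∏ a ∈ t, -(if σ a = tgt a then (1 : ℤ) else 0))
            = ∏ a ∈ t, (-1) * (if σ a = tgt a then (1 : ℤ) else 0) :=
          Finset.prod_congr rfl (fun a _ => (neg_one_mul _).symm)
        rw [h1, Finset.prod_mul_distrib, Finset.prod_const, Finset.prod_boole]
        congr 1
        congr 1
    _ = ∑ t ∈ F.powerset, (-1 : ℤ) ^ #t * ((n - #t - 1).factorial : ℤ) := by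
        refine Finset.sum_congr rfl fun t ht => ?_
        rw [Finset.sum_boole, hcount t ht]
    _ = ∑ j ∈ Finset.range (#F + 1),
          (#F).choose j • ((-1 : ℤ) ^ j * ((n - j - 1).factorial : ℤ)) :=
        Finset.sum_powerset_apply_card (fun j => (-1 : ℤ) ^ j * ((n - j - 1).factorial : ℤ))
    _ = ∑ j ∈ Finset.range (n - k + 1),
        (-1 : ℤ) ^ j * (n - k).choose j * (n - j - 1).factorial := by
        rw [hFcard]
        refine Finset.sum_congr rfl fun j _ => ?_
        rw [nsmul_eq_mul]
        ring
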